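/- arXiv:1101.0221 — 9 statements merged into one kernel-verified Lean document; each statement's English description precedes it below -/
import Mathlib

section
/- Let R be a 2-torsion free ring and G = (δ_i)_{i∈ℕ} an additive generalized Jordan higher derivation on R whose relating family D = (τ_i)_{i∈ℕ} is a higher derivation. Then for every n ∈ ℕ and all X, Y ∈ R, δ_n(XYX) = Σ_{i+j+k=n} δ_i(X)τ_j(Y)τ_k(X). -/
open Finset




theorem tri0 {M : Type*} [AddCommMonoid M] (f : ℕ → ℕ → ℕ → M) (n : ℕ) :
    ∑ p ∈ antidiagonal n, ∑ q ∈ antidiagonal p.2, f p.1 q.1 q.2 =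
    ∑ p ∈ antidiagonal n, ∑ q ∈ antidiagonal p.1, f q.1 q.2 p.2 := by
  rw [Finset.sum_sigma', Finset.sum_sigma']
  apply Finset.sum_nbij' (fun x => ⟨(x.1.1 + x.2.1, x.2.2), (x.1.1, x.2.1)⟩)
    (fun x => ⟨(x.2.1, x.2.2 + x.1.2), (x.2.2, x.1.2)⟩) <;>
    intro x hx <;>
    simp only [Finset.mem_sigma, Finset.mem_antidiagonal] at hx ⊢ <;>
    first | rfl | omega | (obtain ⟨⟨a,b⟩,c,d⟩ := x; simp at hx ⊢; omega)


/-- Lemma 2.1(2): if `R` is 2-torsion free and `G = (δ_i)` is an additive generalized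
Jordan higher derivation on `R` whose relating family `D = (τ_i)` is a higher
derivation, then `δ_n(XYX) = Σ_{i+j+k=n} δ_i(X)τ_j(Y)τ_k(X)`. -/
theorem stmt1 {R : Type*} [Ring R]
    (htf : ∀ x : R, x + x = 0 → x = 0)
    (δ τ : ℕ → R → R)
    (hδ0 : δ 0 = id) (hτ0 : τ 0 = id)
    (hδadd : ∀ n X Y, δ n (X + Y) = δ n X + δ n Y)
    (hτadd : ∀ n X Y, τ n (X + Y) = τ n X + τ n Y)
    (hτHD : ∀ n X Y, τ n (X * Y) = ∑ ij ∈ Finset.HasAntidiagonal.antidiagonal n, τ ij.1 X * τ ij.2 Y)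
    (hδJ : ∀ n X, δ n (X * X) = ∑ ij ∈ Finset.HasAntidiagonal.antidiagonal n, δ ij.1 X * τ ij.2 X) :
    ∀ n X Y, δ n (X * Y * X) =
      ∑ ij ∈ Finset.HasAntidiagonal.antidiagonal n, ∑ kl ∈ Finset.HasAntidiagonal.antidiagonal ij.2,
        δ ij.1 X * τ kl.1 Y * τ kl.2 X := by
  have key : ∀ a b c d : R, a + b + c = a + (d + c) → b = d := by
    intro a b c d h
    rw [add_assoc] at h
    exact add_right_cancel (add_left_cancel h)
  have lin : ∀ n (X Y : R), δ n (X * Y + Y * X) =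
      ∑ p ∈ antidiagonal n, (δ p.1 X * τ p.2 Y + δ p.1 Y * τ p.2 X) := by
    intro n X Y
    have h := hδJ n (X + Y)
    have e : (X + Y) * (X + Y) = X * X + (X * Y + Y * X) + Y * Y := by noncomm_ring
    rw [e, hδadd, hδadd] at h
    simp only [hδadd, hτadd, mul_add, add_mul, Finset.sum_add_distrib] at h
    rw [← hδadd n (X * Y) (Y * X), ← hδJ n X, ← hδJ n Y] at h
    apply key (δ n (X * X)) _ (δ n (Y * Y))
    rw [h, Finset.sum_add_distrib]; abel
  intro n X Y
  have hE := lin n X (X * Y + Y * X)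
  have hL : X * (X * Y + Y * X) + (X * Y + Y * X) * X
      = (X * X) * Y + Y * (X * X) + (X * Y * X + X * Y * X) := by noncomm_ring
  rw [hL, hδadd, lin n (X * X) Y, hδadd] at hE
  simp only [lin, hτadd, hτHD, hδJ, Finset.sum_mul, Finset.mul_sum, mul_add, add_mul,
    Finset.sum_add_distrib] at hE
  set D := δ n (X * Y * X) with hD
  set S := ∑ ij ∈ antidiagonal n, ∑ kl ∈ antidiagonal ij.2,
      δ ij.1 X * τ kl.1 Y * τ kl.2 X with hS
  have eA1 : ∑ x ∈ antidiagonal n, ∑ i ∈ antidiagonal x.1, δ i.1 X * τ i.2 X * τ x.2 Y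
      = ∑ x ∈ antidiagonal n, ∑ i ∈ antidiagonal x.2, δ x.1 X * (τ i.1 X * τ i.2 Y) := by
    simp only [mul_assoc]
    exact (tri0 (fun a b c => δ a X * (τ b X * τ c Y)) n).symm
  have eA2 : ∑ x ∈ antidiagonal n, ∑ i ∈ antidiagonal x.2, δ x.1 Y * (τ i.1 X * τ i.2 X)
      = ∑ x ∈ antidiagonal n, ∑ i ∈ antidiagonal x.1, δ i.1 Y * τ i.2 X * τ x.2 X := by
    simp only [mul_assoc]
    exact tri0 (fun a b c => δ a Y * (τ b X * τ c X)) n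
  have eB2 : ∑ x ∈ antidiagonal n, ∑ i ∈ antidiagonal x.2, δ x.1 X * (τ i.1 Y * τ i.2 X)
      = S := by
    rw [hS]; simp only [mul_assoc]
  have eB3 : ∑ x ∈ antidiagonal n, ∑ i ∈ antidiagonal x.1, δ i.1 X * τ i.2 Y * τ x.2 X
      = S := by
    rw [hS]; exact (tri0 (fun a b c => δ a X * τ b Y * τ c X) n).symm
  rw [eA1, eA2, eB2, eB3] at hE
  set A := ∑ x ∈ antidiagonal n, ∑ i ∈ antidiagonal x.2, δ x.1 X * (τ i.1 X * τ i.2 Y) with hA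
  set B := ∑ x ∈ antidiagonal n, ∑ i ∈ antidiagonal x.1, δ i.1 Y * τ i.2 X * τ x.2 X with hB
  have hDD : D + D = S + S := by
    have h3 : (D + D) - (S + S) = (A + B + (D + D)) - (A + S + (S + B)) := by abel
    rw [hE, sub_self] at h3
    exact sub_eq_zero.mp h3
  have h0 : (D - S) + (D - S) = 0 := by rw [sub_add_sub_comm, hDD, sub_self]
  exact sub_eq_zero.mp (htf _ h0)
end

section
/- Let P be an idempotent in a ring R and D = (τ_i)_{i∈ℕ} a higher derivation on R such that τ_n(P) ∈ P R (1−P) for all n ≥ 1, where R is unital. Then for every X ∈ R and every n ≥ 1, τ_n(PX(1−P)) ∈ P R (1−P), provided (1−P)RP = {0}. -/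
/-- Let `R` be a unital ring, `P` an idempotent with `(1-P)RP = {0}`, and
`D = (τ_i)` a higher derivation on `R` with `τ_n(P) ∈ PR(1-P)` for all `n ≥ 1`.
Then `τ_n(PX(1-P)) ∈ PR(1-P)` for every `X ∈ R` and `n ≥ 1`. -/
theorem stmt3 {R : Type*} [Ring R] (P : R) (hP : P * P = P)
    (hQRP : ∀ s : R, (1 - P) * s * P = 0)
    (τ : ℕ → R → R)
    (hτ0 : τ 0 = id)
    (hτadd : ∀ n X Y, τ n (X + Y) = τ n X + τ n Y)
    (hτHD : ∀ n X Y, τ n (X * Y) = ∑ ij ∈ Finset.HasAntidiagonal.antidiagonal n, τ ij.1 X * τ ij.2 Y)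
    (hτP : ∀ n, 1 ≤ n → ∃ s : R, τ n P = P * s * (1 - P)) :
    ∀ (X : R) (n : ℕ), 1 ≤ n → ∃ s : R, τ n (P * X * (1 - P)) = P * s * (1 - P) := by
  have hQP : (1 - P) * P = 0 := by rw [sub_mul, one_mul, hP, sub_self]
  -- τ m 1 = 0 for m ≥ 1
  have hone : ∀ m : ℕ, 1 ≤ m → τ m (1 : R) = 0 := by
    intro m
    induction m using Nat.strong_induction_on with
    | _ m ih =>
      intro hm
      have e : τ m (1 : R) = ∑ k ∈ Finset.range (m + 1), τ k (1 : R) * τ (m - k) (1 : R) := by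
        conv_lhs => rw [show (1 : R) = 1 * 1 by rw [one_mul]]
        rw [hτHD, Finset.Nat.sum_antidiagonal_eq_sum_range_succ_mk]
      rw [Finset.sum_range_succ] at e
      have emid : ∑ k ∈ Finset.range m, τ k (1 : R) * τ (m - k) (1 : R) = τ m (1 : R) := by
        rw [Finset.sum_eq_single_of_mem 0 (Finset.mem_range.mpr (by omega))]
        · simp [hτ0]
        · intro k hk hk0
          rw [ih k (Finset.mem_range.mp hk) (by omega), zero_mul]
      rw [emid, Nat.sub_self, hτ0] at e
      simp only [id_eq, mul_one] at e
      exact right_eq_add.mp e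
  -- τ m (1 - P) = - τ m P for m ≥ 1
  have hQform : ∀ m : ℕ, 1 ≤ m → τ m (1 - P) = - τ m P := by
    intro m hm
    have e := hτadd m P (1 - P)
    rw [add_sub_cancel, hone m hm] at e
    exact eq_neg_of_add_eq_zero_left (by rw [add_comm]; exact e.symm)
  intro X
  set Y : R := P * X * (1 - P) with hY
  have hPY : P * Y = Y := by
    rw [hY]; rw [← mul_assoc, ← mul_assoc, hP, mul_assoc]
  have hYQ : Y * (1 - P) = Y := by
    rw [hY, mul_assoc, mul_assoc, mul_sub, mul_one, sub_mul, one_mul, hP, sub_self, sub_zero, ← mul_assoc]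
  -- main strong induction: Pa = a and aQ = a
  have key : ∀ n : ℕ, 1 ≤ n → P * τ n Y = τ n Y ∧ τ n Y * (1 - P) = τ n Y := by
    intro n
    induction n using Nat.strong_induction_on with
    | _ n ih =>
      intro hn
      constructor
      · -- left: from Y = P * Y
        have e : τ n Y = ∑ k ∈ Finset.range (n + 1), τ k P * τ (n - k) Y := by
          conv_lhs => rw [← hPY]
          rw [hτHD, Finset.Nat.sum_antidiagonal_eq_sum_range_succ_mk]
        rw [Finset.sum_eq_single_of_mem 0 (Finset.mem_range.mpr (by omega))] at e
        · rw [hτ0] at e; simp only [id_eq, Nat.sub_zero] at e; exact e.symm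
        · intro k hk hk0
          obtain ⟨s, hs⟩ := hτP k (by omega)
          have hpt : P * τ (n - k) Y = τ (n - k) Y := by
            rcases Nat.eq_zero_or_pos (n - k) with h0 | h1
            · rw [h0, hτ0]; simpa using hPY
            · exact (ih (n - k) (by omega) h1).1
          rw [hs, ← hpt, mul_assoc, mul_assoc, ← mul_assoc (1 - P), hQP, zero_mul,
            mul_zero, mul_zero]
      · -- right: from Y = Y * (1 - P)
        have e : τ n Y = ∑ k ∈ Finset.range (n + 1), τ k Y * τ (n - k) (1 - P) := by
          conv_lhs => rw [← hYQ]
          rw [hτHD, Finset.Nat.sum_antidiagonal_eq_sum_range_succ_mk]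
        rw [Finset.sum_range_succ] at e
        have emid : ∑ k ∈ Finset.range n, τ k Y * τ (n - k) (1 - P) = 0 := by
          apply Finset.sum_eq_zero
          intro k hk
          have hkn := Finset.mem_range.mp hk
          obtain ⟨s, hs⟩ := hτP (n - k) (by omega)
          have hqt : τ k Y * (1 - P) = τ k Y := by
            rcases Nat.eq_zero_or_pos k with h0 | h1
            · rw [h0, hτ0]; simpa using hYQ
            · exact (ih k hkn h1).2
          rw [hQform (n - k) (by omega), hs, ← hqt]
          rw [mul_neg, mul_assoc, mul_assoc]
          rw [show (1 - P) * (P * (s * (1 - P))) = 0 by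
            rw [← mul_assoc, hQP, zero_mul]]
          simp
        rw [emid, zero_add, Nat.sub_self, hτ0] at e
        simp only [id_eq] at e
        exact e.symm
  intro n hn
  obtain ⟨h1, h2⟩ := key n hn
  exact ⟨τ n Y, by rw [mul_assoc, h2, h1]⟩
end

section
/- Let R be a unital ring, P an idempotent with (1−P)RP = {0}, Q = 1−P, and D = (τ_i)_{i∈ℕ} a higher derivation on R with τ_n(P) ∈ PRQ for all n ≥ 1. Then for every X ∈ R and every n ≥ 1, τ_n(PXP) ∈ PRP + PRQ. -/
/-- Let `R` be a unital ring, `P` an idempotent with `(1-P)RP = {0}`, `Q = 1 - P`,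
and `D = (τ_i)` a higher derivation on `R` with `τ_n(P) ∈ PRQ` for all `n ≥ 1`.
Then `τ_n(PXP) ∈ PRP + PRQ` for every `X ∈ R` and every `n ≥ 1`. -/
theorem stmt4 {R : Type*} [Ring R] (P : R) (hP : P * P = P)
    (hQRP : ∀ s : R, (1 - P) * s * P = 0)
    (τ : ℕ → R → R)
    (hτ0 : τ 0 = id)
    (hτadd : ∀ n X Y, τ n (X + Y) = τ n X + τ n Y)
    (hτHD : ∀ n X Y, τ n (X * Y) = ∑ ij ∈ Finset.HasAntidiagonal.antidiagonal n, τ ij.1 X * τ ij.2 Y)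
    (hτP : ∀ n, 1 ≤ n → ∃ s : R, τ n P = P * s * (1 - P)) :
    ∀ (X : R) (n : ℕ), 1 ≤ n →
      ∃ s t : R, τ n (P * X * P) = P * s * P + P * t * (1 - P) := by
  intro X n hn
  set y := τ n (P * X * P) with hy
  have key : (1 - P) * y = 0 := by
    have h1 : P * X * P = P * (X * P) := by rw [mul_assoc]
    have h2 : y = ∑ ij ∈ Finset.HasAntidiagonal.antidiagonal n, τ ij.1 P * τ ij.2 (X * P) := by
      rw [hy, h1, hτHD]
    rw [h2, Finset.mul_sum]
    apply Finset.sum_eq_zero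
    intro ij hij
    rcases Nat.eq_zero_or_pos ij.1 with h0 | hpos
    · rw [h0, hτ0]
      simp only [id_eq]
      rw [← mul_assoc, sub_mul, one_mul, hP, sub_self, zero_mul]
    · obtain ⟨s, hs⟩ := hτP ij.1 hpos
      rw [hs, ← mul_assoc, ← mul_assoc, ← mul_assoc, sub_mul, one_mul, hP, sub_self,
        zero_mul, zero_mul, zero_mul]
  have hPy : P * y = y := by
    have := key
    rw [sub_mul, one_mul, sub_eq_zero] at this
    exact this.symm
  refine ⟨y, y, ?_⟩
  have : P * y * P + P * y * (1 - P) = P * y := by noncomm_ring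
  rw [this, hPy]
end

section
/- Let U = Tri(A, M, B) be a triangular ring with standard idempotent P and Q = I − P. If G = (δ_i)_{i∈ℕ} is an additive generalized Jordan higher derivation on U with relating Jordan higher derivation D = (τ_i) satisfying τ_n(P), τ_n(Q) ∈ PUQ for n ≥ 1, and δ_m satisfies δ_m(P) ∈ PUP + PUQ for all m < n, then δ_n(P) ∈ PUP + PUQ. -/
set_option linter.unusedSectionVars false

/-- The triangular ring `Tri A M B` of formal upper triangular matrices
`[[a, m], [0, b]]` with `a ∈ A`, `m ∈ M`, `b ∈ B`, where `M` is an
`(A, B)`-bimodule (the right `B`-action encoded as a left `Bᵐᵒᵖ`-action). -/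
@[ext]
structure Tri (A M B : Type*) where
  a : A
  m : M
  b : B

namespace Tri

variable {A M B : Type*} [Ring A] [Ring B] [AddCommGroup M]
  [Module A M] [Module Bᵐᵒᵖ M] [SMulCommClass A Bᵐᵒᵖ M]

instance : Add (Tri A M B) := ⟨fun x y => ⟨x.a + y.a, x.m + y.m, x.b + y.b⟩⟩
instance : Zero (Tri A M B) := ⟨⟨0, 0, 0⟩⟩
instance : Neg (Tri A M B) := ⟨fun x => ⟨-x.a, -x.m, -x.b⟩⟩
instance : One (Tri A M B) := ⟨⟨1, 0, 1⟩⟩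
instance : Mul (Tri A M B) :=
  ⟨fun x y => ⟨x.a * y.a, x.a • y.m + MulOpposite.op y.b • x.m, x.b * y.b⟩⟩

@[simp] lemma add_a (x y : Tri A M B) : (x + y).a = x.a + y.a := rfl
@[simp] lemma add_m (x y : Tri A M B) : (x + y).m = x.m + y.m := rfl
@[simp] lemma add_b (x y : Tri A M B) : (x + y).b = x.b + y.b := rfl
@[simp] lemma zero_a : (0 : Tri A M B).a = 0 := rfl
@[simp] lemma zero_m : (0 : Tri A M B).m = 0 := rfl
@[simp] lemma zero_b : (0 : Tri A M B).b = 0 := rfl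
@[simp] lemma neg_a (x : Tri A M B) : (-x).a = -x.a := rfl
@[simp] lemma neg_m (x : Tri A M B) : (-x).m = -x.m := rfl
@[simp] lemma neg_b (x : Tri A M B) : (-x).b = -x.b := rfl
@[simp] lemma one_a : (1 : Tri A M B).a = 1 := rfl
@[simp] lemma one_m : (1 : Tri A M B).m = 0 := rfl
@[simp] lemma one_b : (1 : Tri A M B).b = 1 := rfl
@[simp] lemma mul_a (x y : Tri A M B) : (x * y).a = x.a * y.a := rfl
@[simp] lemma mul_m (x y : Tri A M B) :
    (x * y).m = x.a • y.m + MulOpposite.op y.b • x.m := rfl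
@[simp] lemma mul_b (x y : Tri A M B) : (x * y).b = x.b * y.b := rfl

/-- The triangular ring structure on `Tri A M B`. -/
instance : Ring (Tri A M B) where
  add_assoc x y z := by ext <;> simp [add_assoc]
  zero_add x := by ext <;> simp
  add_zero x := by ext <;> simp
  add_comm x y := by ext <;> simp [add_comm]
  neg_add_cancel x := by ext <;> simp
  nsmul := nsmulRec
  zsmul := zsmulRec
  left_distrib x y z := by ext <;> simp [mul_add, smul_add, add_smul] <;> abel
  right_distrib x y z := by ext <;> simp [add_mul, smul_add, add_smul] <;> abel
  zero_mul x := by ext <;> simp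
  mul_zero x := by ext <;> simp
  mul_assoc x y z := by
    ext <;> simp [mul_assoc, mul_smul, smul_add, smul_comm] <;> abel
  one_mul x := by ext <;> simp
  mul_one x := by ext <;> simp

end Tri

variable (A M B : Type*) [Ring A] [Ring B] [AddCommGroup M]
  [Module A M] [Module Bᵐᵒᵖ M] [SMulCommClass A Bᵐᵒᵖ M]

/-- The standard idempotent `P = [[1,0],[0,0]]` of the triangular ring. -/
def Tri.P : Tri A M B := ⟨1, 0, 0⟩

variable {A M B}

/-- Membership in the corner `P·U·Q` of the triangular ring `U`,
where `Q = 1 - P`. -/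
def Tri.inPUQ (x : Tri A M B) : Prop :=
  ∃ s : Tri A M B, x = Tri.P A M B * s * (1 - Tri.P A M B)

/-- Membership in `P·U·P + P·U·Q`. -/
def Tri.inPUPQ (x : Tri A M B) : Prop :=
  ∃ s t : Tri A M B,
    x = Tri.P A M B * s * Tri.P A M B + Tri.P A M B * t * (1 - Tri.P A M B)

/-- Membership in `Q·U·Q + P·U·Q`. -/
def Tri.inQUQQ (x : Tri A M B) : Prop :=
  ∃ s t : Tri A M B,
    x = (1 - Tri.P A M B) * s * (1 - Tri.P A M B) +
      Tri.P A M B * t * (1 - Tri.P A M B)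

/-- Step 1 of Theorem 3.1: under the inductive hypotheses,
`δ_n(P) ∈ PUP + PUQ` for the standard idempotent `P` of the triangular ring. -/
theorem stmt6 (δ τ : ℕ → Tri A M B → Tri A M B) (n : ℕ)
    (hδ0 : δ 0 = id) (hτ0 : τ 0 = id)
    (hδadd : ∀ k X Y, δ k (X + Y) = δ k X + δ k Y)
    (hτadd : ∀ k X Y, τ k (X + Y) = τ k X + τ k Y)
    (hτJ : ∀ k X, τ k (X * X) = ∑ ij ∈ Finset.HasAntidiagonal.antidiagonal k, τ ij.1 X * τ ij.2 X)
    (hδJ : ∀ k X, δ k (X * X) = ∑ ij ∈ Finset.HasAntidiagonal.antidiagonal k, δ ij.1 X * τ ij.2 X)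
    (hτP : ∀ k, 1 ≤ k → Tri.inPUQ (τ k (Tri.P A M B)))
    (hτQ : ∀ k, 1 ≤ k → Tri.inPUQ (τ k (1 - Tri.P A M B)))
    (hδmP : ∀ m < n, Tri.inPUPQ (δ m (Tri.P A M B))) :
    Tri.inPUPQ (δ n (Tri.P A M B)) := by
  classical
  -- the b-component as an additive hom
  let bHom : Tri A M B →+ B :=
    { toFun := Tri.b, map_zero' := rfl, map_add' := fun _ _ => rfl }
  -- every τ j P has zero b-component
  have hτb : ∀ j, (τ j (Tri.P A M B)).b = 0 := by
    intro j
    rcases Nat.eq_zero_or_pos j with hj | hj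
    · subst hj; rw [hτ0]; rfl
    · obtain ⟨s, hs⟩ := hτP j hj
      rw [hs]; simp [Tri.P]
  have hPP : Tri.P A M B * Tri.P A M B = Tri.P A M B := by
    ext <;> simp [Tri.P]
  have key : (δ n (Tri.P A M B)).b = 0 := by
    have h := hδJ n (Tri.P A M B)
    rw [hPP] at h
    have hb := congrArg bHom h
    rw [map_sum] at hb
    have : ∀ ij ∈ Finset.HasAntidiagonal.antidiagonal n,
        bHom (δ ij.1 (Tri.P A M B) * τ ij.2 (Tri.P A M B)) = 0 := by
      intro ij _
      show (δ ij.1 (Tri.P A M B) * τ ij.2 (Tri.P A M B)).b = 0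
      rw [Tri.mul_b, hτb, mul_zero]
    rw [Finset.sum_eq_zero this] at hb
    exact hb
  have hQ : (1 - Tri.P A M B) = (⟨0, 0, 1⟩ : Tri A M B) := by
    ext <;> simp [Tri.P, sub_eq_add_neg]
  refine ⟨⟨(δ n (Tri.P A M B)).a, 0, 0⟩, ⟨0, (δ n (Tri.P A M B)).m, 0⟩, ?_⟩
  simp only [Tri.P] at key ⊢
  simp only [Tri.P] at hQ
  rw [hQ]
  ext <;> simp [Tri.P, key, MulOpposite.op_one]
end

section
/- Let U = Tri(A, M, B) be a triangular ring with standard idempotent P and Q = I − P. Suppose G = (δ_i)_{i∈ℕ} is an additive generalized Jordan higher derivation on U with relating higher derivation D = (τ_i). If δ_m(PUQ) ⊆ PUQ and δ_m(P) ∈ PUP + PUQ hold for all m < n, and δ_n(P) ∈ PUP + PUQ, then δ_n(PXQ) ∈ PUQ for every X ∈ U. -/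
set_option linter.unusedSectionVars false

variable (A M B : Type*) [Ring A] [Ring B] [AddCommGroup M]
  [Module A M] [Module Bᵐᵒᵖ M] [SMulCommClass A Bᵐᵒᵖ M]

variable {A M B}

section Aux

variable {A M B : Type*} [Ring A] [Ring B] [AddCommGroup M]
  [Module A M] [Module Bᵐᵒᵖ M] [SMulCommClass A Bᵐᵒᵖ M]

lemma Tri.PsQ_a (s : Tri A M B) :
    (Tri.P A M B * s * (1 - Tri.P A M B)).a = 0 := by
  simp [Tri.P, sub_eq_add_neg]

lemma Tri.PsQ_b (s : Tri A M B) :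
    (Tri.P A M B * s * (1 - Tri.P A M B)).b = 0 := by
  simp [Tri.P, sub_eq_add_neg]

lemma Tri.inPUQ_a {x : Tri A M B} (h : Tri.inPUQ x) : x.a = 0 := by
  obtain ⟨s, rfl⟩ := h; exact Tri.PsQ_a s

lemma Tri.inPUQ_b {x : Tri A M B} (h : Tri.inPUQ x) : x.b = 0 := by
  obtain ⟨s, rfl⟩ := h; exact Tri.PsQ_b s

lemma Tri.inPUQ_of_ab {x : Tri A M B} (ha : x.a = 0) (hb : x.b = 0) :
    Tri.inPUQ x := by
  refine ⟨x, ?_⟩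
  ext <;> simp [Tri.P, sub_eq_add_neg, ha, hb]

/-- `a` as an additive monoid hom. -/
def Tri.aHom : Tri A M B →+ A where
  toFun := Tri.a
  map_zero' := rfl
  map_add' _ _ := rfl

/-- `b` as an additive monoid hom. -/
def Tri.bHom : Tri A M B →+ B where
  toFun := Tri.b
  map_zero' := rfl
  map_add' _ _ := rfl

end Aux

/-- Step 2 of Theorem 3.1: under the inductive hypotheses at stage `n`,
`δ_n(PXQ) ∈ PUQ` for every `X` in the triangular ring. -/
theorem stmt7 (δ τ : ℕ → Tri A M B → Tri A M B) (n : ℕ)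
    (hδ0 : δ 0 = id) (hτ0 : τ 0 = id)
    (hδadd : ∀ k X Y, δ k (X + Y) = δ k X + δ k Y)
    (hτadd : ∀ k X Y, τ k (X + Y) = τ k X + τ k Y)
    (hτHD : ∀ k X Y, τ k (X * Y) = ∑ ij ∈ Finset.HasAntidiagonal.antidiagonal k, τ ij.1 X * τ ij.2 Y)
    (hτP : ∀ k, 1 ≤ k → Tri.inPUQ (τ k (Tri.P A M B)))
    (hτQ : ∀ k, 1 ≤ k → Tri.inPUQ (τ k (1 - Tri.P A M B)))
    (hτPUQ : ∀ k X, Tri.inPUQ (τ k (Tri.P A M B * X * (1 - Tri.P A M B))))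
    (hLem : ∀ X Y, δ n (X * Y + Y * X) =
      ∑ ij ∈ Finset.HasAntidiagonal.antidiagonal n, (δ ij.1 X * τ ij.2 Y + δ ij.1 Y * τ ij.2 X))
    (hδmPUQ : ∀ m < n, ∀ X, Tri.inPUQ (δ m (Tri.P A M B * X * (1 - Tri.P A M B))))
    (hδmP : ∀ m < n, Tri.inPUPQ (δ m (Tri.P A M B)))
    (hδnP : Tri.inPUPQ (δ n (Tri.P A M B))) :
    ∀ X, Tri.inPUQ (δ n (Tri.P A M B * X * (1 - Tri.P A M B))) := by
  intro X
  set P : Tri A M B := Tri.P A M B with hP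
  set W : Tri A M B := P * X * (1 - P) with hW
  -- τ_k(1) has zero `a` and `b` components for k ≥ 1
  have hτ1a : ∀ k, 1 ≤ k → (τ k 1).a = 0 := by
    intro k hk
    have h1 : (1 : Tri A M B) = P + (1 - P) := by abel
    rw [h1, hτadd]
    simp [Tri.inPUQ_a (hτP k hk), Tri.inPUQ_a (hτQ k hk)]
  have hτ1b : ∀ k, 1 ≤ k → (τ k 1).b = 0 := by
    intro k hk
    have h1 : (1 : Tri A M B) = P + (1 - P) := by abel
    rw [h1, hτadd]
    simp [Tri.inPUQ_b (hτP k hk), Tri.inPUQ_b (hτQ k hk)]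
  have hWa : W.a = 0 := Tri.PsQ_a X
  have hWb : W.b = 0 := Tri.PsQ_b X
  have key := hLem W 1
  rw [mul_one, one_mul, hδadd] at key
  -- a component
  have ha : (δ n W).a = 0 := by
    have := congrArg Tri.a key
    rw [show (Tri.a : Tri A M B → A) = Tri.aHom from rfl, map_add,
      map_sum] at this
    have hsum : ∑ ij ∈ Finset.HasAntidiagonal.antidiagonal n,
        Tri.aHom (δ ij.1 W * τ ij.2 1 + δ ij.1 1 * τ ij.2 W) = (δ n W).a := by
      rw [Finset.sum_eq_single_of_mem (n, 0) (by simp)]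
      · simp [Tri.aHom, hτ0, hWa]
      · rintro ⟨i, j⟩ hmem hne
        have hj : 1 ≤ j := by
          rcases Nat.eq_zero_or_pos j with h | h
          · exfalso; apply hne
            simp only [Finset.HasAntidiagonal.mem_antidiagonal] at hmem
            simp [h] at hmem ⊢; omega
          · exact h
        simp [Tri.aHom, hτ1a j hj, show (τ j W).a = 0 from Tri.inPUQ_a (hτPUQ j X)]
    rw [hsum] at this
    have : Tri.aHom (δ n W) + Tri.aHom (δ n W) = Tri.aHom (δ n W) := this
    exact add_eq_right.mp this
  have hb : (δ n W).b = 0 := by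
    have := congrArg Tri.b key
    rw [show (Tri.b : Tri A M B → B) = Tri.bHom from rfl, map_add,
      map_sum] at this
    have hsum : ∑ ij ∈ Finset.HasAntidiagonal.antidiagonal n,
        Tri.bHom (δ ij.1 W * τ ij.2 1 + δ ij.1 1 * τ ij.2 W) = (δ n W).b := by
      rw [Finset.sum_eq_single_of_mem (n, 0) (by simp)]
      · simp [Tri.bHom, hτ0, hWb]
      · rintro ⟨i, j⟩ hmem hne
        have hj : 1 ≤ j := by
          rcases Nat.eq_zero_or_pos j with h | h
          · exfalso; apply hne
            simp only [Finset.HasAntidiagonal.mem_antidiagonal] at hmem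
            simp [h] at hmem ⊢; omega
          · exact h
        simp [Tri.bHom, hτ1b j hj, show (τ j W).b = 0 from Tri.inPUQ_b (hτPUQ j X)]
    rw [hsum] at this
    have : Tri.bHom (δ n W) + Tri.bHom (δ n W) = Tri.bHom (δ n W) := this
    exact add_eq_right.mp this
  exact Tri.inPUQ_of_ab ha hb
end

section
/- Let U be a triangular ring with standard idempotent P, Q = I − P, and let G = (δ_i) be an additive generalized Jordan higher derivation on U with relating higher derivation D = (τ_i), satisfying the inductive hypotheses of Theorem 3.1 at stage n. Then for all X, Y ∈ U: δ_n(PXPYQ) = Σ_{i+j=n} δ_i(PXP)τ_j(PYQ). -/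
set_option linter.unusedSectionVars false

variable (A M B : Type*) [Ring A] [Ring B] [AddCommGroup M]
  [Module A M] [Module Bᵐᵒᵖ M] [SMulCommClass A Bᵐᵒᵖ M]

variable {A M B}

/-- Step 5(2) of Theorem 3.1: under the inductive hypotheses at stage `n`,
`δ_n(PXPYQ) = Σ_{i+j=n} δ_i(PXP)τ_j(PYQ)`. -/
theorem stmt9 (δ τ : ℕ → Tri A M B → Tri A M B) (n : ℕ)
    (hδ0 : δ 0 = id) (hτ0 : τ 0 = id)
    (hδadd : ∀ k X Y, δ k (X + Y) = δ k X + δ k Y)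
    (hLem : ∀ X Y, δ n (X * Y + Y * X) =
      ∑ ij ∈ Finset.HasAntidiagonal.antidiagonal n, (δ ij.1 X * τ ij.2 Y + δ ij.1 Y * τ ij.2 X))
    (hδiPUQ : ∀ i ≤ n, ∀ X, Tri.inPUQ (δ i (Tri.P A M B * X * (1 - Tri.P A M B))))
    (hτPUP : ∀ j X, Tri.inPUPQ (τ j (Tri.P A M B * X * Tri.P A M B)))
    (hτPUQ : ∀ j X, Tri.inPUQ (τ j (Tri.P A M B * X * (1 - Tri.P A M B)))) :
    ∀ X Y, δ n (Tri.P A M B * X * Tri.P A M B * Y * (1 - Tri.P A M B)) =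
      ∑ ij ∈ Finset.HasAntidiagonal.antidiagonal n,
        δ ij.1 (Tri.P A M B * X * Tri.P A M B) *
          τ ij.2 (Tri.P A M B * Y * (1 - Tri.P A M B)) := by
  intro X Y
  have hPP : Tri.P A M B * Tri.P A M B = Tri.P A M B := by
    ext <;> simp [Tri.P]
  set P := Tri.P A M B with hP
  have hQP : (1 - P) * P = 0 := by rw [sub_mul, one_mul, hPP, sub_self]
  have haux : ∀ s x : Tri A M B, (P * s * (1 - P)) * (P * x) = 0 := by
    intro s x
    rw [mul_assoc, ← mul_assoc (1 - P) P x, hQP, zero_mul, mul_zero]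
  have hXY : (P * X * P) * (P * Y * (1 - P)) = P * X * P * Y * (1 - P) := by
    have h2 : P * (P * (Y * (1 - P))) = P * (Y * (1 - P)) := by
      rw [← mul_assoc, hPP]
    simp only [mul_assoc, h2]
  have hYX : (P * Y * (1 - P)) * (P * X * P) = 0 := by
    rw [mul_assoc P X P, haux]
  have key := hLem (P * X * P) (P * Y * (1 - P))
  rw [hYX, add_zero, hXY] at key
  rw [key]
  refine Finset.sum_congr rfl fun ij hij => ?_
  have hi : ij.1 ≤ n := by
    rw [Finset.HasAntidiagonal.mem_antidiagonal] at hij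
    omega
  obtain ⟨u, hu⟩ := hδiPUQ ij.1 hi Y
  obtain ⟨s, t, hst⟩ := hτPUP ij.2 X
  rw [hu, hst, mul_add, mul_assoc P s P, haux, mul_assoc P t (1 - P), haux,
    add_zero, add_zero]
end

section
/- Let U be a triangular ring with standard idempotent P, Q = I − P, and let G = (δ_i) be an additive generalized Jordan higher derivation with relating higher derivation D = (τ_i), satisfying the inductive hypotheses of Theorem 3.1 at stage n. Then for all X, Y ∈ U: δ_n(PXQYQ) = Σ_{i+j=n} δ_i(PXQ)τ_j(QYQ). -/
set_option linter.unusedSectionVars false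

variable (A M B : Type*) [Ring A] [Ring B] [AddCommGroup M]
  [Module A M] [Module Bᵐᵒᵖ M] [SMulCommClass A Bᵐᵒᵖ M]

variable {A M B}

/-- Step 5(3) of Theorem 3.1: under the inductive hypotheses at stage `n`,
`δ_n(PXQYQ) = Σ_{i+j=n} δ_i(PXQ)τ_j(QYQ)`. -/
theorem stmt10 (δ τ : ℕ → Tri A M B → Tri A M B) (n : ℕ)
    (hδ0 : δ 0 = id) (hτ0 : τ 0 = id)
    (hδadd : ∀ k X Y, δ k (X + Y) = δ k X + δ k Y)
    (hLem : ∀ X Y, δ n (X * Y + Y * X) =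
      ∑ ij ∈ Finset.HasAntidiagonal.antidiagonal n, (δ ij.1 X * τ ij.2 Y + δ ij.1 Y * τ ij.2 X))
    (hδiQUQ : ∀ i ≤ n, ∀ X,
      Tri.inQUQQ (δ i ((1 - Tri.P A M B) * X * (1 - Tri.P A M B))))
    (hτQUQ : ∀ j X, Tri.inQUQQ (τ j ((1 - Tri.P A M B) * X * (1 - Tri.P A M B))))
    (hτPUQ : ∀ j X, Tri.inPUQ (τ j (Tri.P A M B * X * (1 - Tri.P A M B)))) :
    ∀ X Y, δ n (Tri.P A M B * X * (1 - Tri.P A M B) * Y * (1 - Tri.P A M B)) =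
      ∑ ij ∈ Finset.HasAntidiagonal.antidiagonal n,
        δ ij.1 (Tri.P A M B * X * (1 - Tri.P A M B)) *
          τ ij.2 ((1 - Tri.P A M B) * Y * (1 - Tri.P A M B)) := by

  intro X Y
  set P := Tri.P A M B with hP
  set Q := (1 - P) with hQ
  have hQP : Q * P = 0 := by
    have hPP : P * P = P := by ext <;> simp [Tri.P, hP]
    rw [hQ, sub_mul, one_mul, hPP, sub_self]
  have hQQ : Q * Q = Q := by
    rw [hQ, mul_sub, mul_one, sub_mul, one_mul]
    have hPP : P * P = P := by ext <;> simp [Tri.P, hP]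
    rw [hPP, sub_self, sub_zero]
  have hz : ∀ x y : Tri A M B, x * Q * (P * y) = 0 := by
    intro x y
    rw [mul_assoc, ← mul_assoc Q, hQP, zero_mul, mul_zero]
  set a := P * X * Q with ha
  set b := Q * Y * Q with hb
  have hba : b * a = 0 := by
    rw [hb, ha, mul_assoc P X Q, hz]
  have hab : a * b = P * X * Q * Y * Q := by
    rw [ha, hb, ← mul_assoc, ← mul_assoc, mul_assoc (P * X) Q Q, hQQ]
  have key := hLem a b
  rw [hba, add_zero, hab] at key
  rw [key, Finset.sum_add_distrib]
  have hzero : ∑ ij ∈ Finset.HasAntidiagonal.antidiagonal n, δ ij.1 b * τ ij.2 a = 0 := by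
    apply Finset.sum_eq_zero
    intro ij hij
    have hle : ij.1 ≤ n := Finset.HasAntidiagonal.antidiagonal.fst_le hij
    obtain ⟨s, t, hst⟩ := hδiQUQ ij.1 hle Y
    obtain ⟨u, hu⟩ := hτPUQ ij.2 X
    rw [hb, ha, hst, hu, add_mul, mul_assoc P u Q]
    rw [hz _ _, hz _ _, add_zero]
  rw [hzero, add_zero]
end

section
/- Let U be a triangular ring with standard idempotent P, Q = I − P, and let G = (δ_i) be an additive generalized Jordan higher derivation with relating higher derivation D = (τ_i), satisfying the inductive hypotheses of Theorem 3.1 at stage n. Then Σ_{i+j=n} δ_i(PXP)τ_j(QYQ) = 0 for all X, Y ∈ U. -/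
set_option linter.unusedSectionVars false

variable (A M B : Type*) [Ring A] [Ring B] [AddCommGroup M]
  [Module A M] [Module Bᵐᵒᵖ M] [SMulCommClass A Bᵐᵒᵖ M]

variable {A M B}

section Aux

variable {A M B : Type*} [Ring A] [Ring B] [AddCommGroup M]
  [Module A M] [Module Bᵐᵒᵖ M] [SMulCommClass A Bᵐᵒᵖ M]

lemma Tri.P_idem : Tri.P A M B * Tri.P A M B = Tri.P A M B := by
  ext <;> simp [Tri.P]

lemma Tri.QP_zero : (1 - Tri.P A M B) * Tri.P A M B = 0 := by
  rw [sub_mul, one_mul, Tri.P_idem, sub_self]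

lemma Tri.PQ_zero : Tri.P A M B * (1 - Tri.P A M B) = 0 := by
  rw [mul_sub, mul_one, Tri.P_idem, sub_self]

lemma Tri.key (a b : Tri A M B) :
    (a * (1 - Tri.P A M B)) * (Tri.P A M B * b) = 0 := by
  rw [mul_assoc, ← mul_assoc (1 - Tri.P A M B), Tri.QP_zero, zero_mul, mul_zero]

lemma Tri.quqq_mul_pupq {x y : Tri A M B}
    (hx : Tri.inQUQQ x) (hy : Tri.inPUPQ y) : x * y = 0 := by
  obtain ⟨s, t, rfl⟩ := hx
  obtain ⟨s', t', rfl⟩ := hy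
  rw [add_mul, mul_add, mul_add]
  rw [show (1 - Tri.P A M B) * s * (1 - Tri.P A M B) =
    ((1 - Tri.P A M B) * s) * (1 - Tri.P A M B) from rfl]
  rw [show Tri.P A M B * t * (1 - Tri.P A M B) =
    (Tri.P A M B * t) * (1 - Tri.P A M B) from rfl]
  rw [show Tri.P A M B * s' * Tri.P A M B = Tri.P A M B * (s' * Tri.P A M B) from
    (mul_assoc _ _ _), show Tri.P A M B * t' * (1 - Tri.P A M B) =
    Tri.P A M B * (t' * (1 - Tri.P A M B)) from (mul_assoc _ _ _)]
  rw [Tri.key, Tri.key, Tri.key, Tri.key]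
  simp

end Aux

/-- Step 5(5) of Theorem 3.1: under the inductive hypotheses at stage `n`,
`Σ_{i+j=n} δ_i(PXP)τ_j(QYQ) = 0`. -/
theorem stmt11 (δ τ : ℕ → Tri A M B → Tri A M B) (n : ℕ)
    (hδ0 : δ 0 = id) (hτ0 : τ 0 = id)
    (hδadd : ∀ k X Y, δ k (X + Y) = δ k X + δ k Y)
    (hLem : ∀ X Y, δ n (X * Y + Y * X) =
      ∑ ij ∈ Finset.HasAntidiagonal.antidiagonal n, (δ ij.1 X * τ ij.2 Y + δ ij.1 Y * τ ij.2 X))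
    (hδiPUP : ∀ i ≤ n, ∀ X, Tri.inPUPQ (δ i (Tri.P A M B * X * Tri.P A M B)))
    (hδiQUQ : ∀ i ≤ n, ∀ X,
      Tri.inQUQQ (δ i ((1 - Tri.P A M B) * X * (1 - Tri.P A M B))))
    (hτPUP : ∀ j X, Tri.inPUPQ (τ j (Tri.P A M B * X * Tri.P A M B)))
    (hτQUQ : ∀ j X, Tri.inQUQQ (τ j ((1 - Tri.P A M B) * X * (1 - Tri.P A M B)))) :
    ∀ X Y, ∑ ij ∈ Finset.HasAntidiagonal.antidiagonal n,
      δ ij.1 (Tri.P A M B * X * Tri.P A M B) *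
        τ ij.2 ((1 - Tri.P A M B) * Y * (1 - Tri.P A M B)) = 0 := by
  intro X Y
  have h0 : δ n 0 = 0 := by
    have := hδadd n 0 0; simpa using this
  have hXY : Tri.P A M B * X * Tri.P A M B *
      ((1 - Tri.P A M B) * Y * (1 - Tri.P A M B)) = 0 := by
    rw [show Tri.P A M B * X * Tri.P A M B *
        ((1 - Tri.P A M B) * Y * (1 - Tri.P A M B)) =
      (Tri.P A M B * X) * (Tri.P A M B * ((1 - Tri.P A M B) * (Y * (1 - Tri.P A M B)))) by
        simp only [mul_assoc]]
    rw [← mul_assoc (Tri.P A M B), Tri.PQ_zero, zero_mul, mul_zero]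
  have hYX : (1 - Tri.P A M B) * Y * (1 - Tri.P A M B) *
      (Tri.P A M B * X * Tri.P A M B) = 0 := by
    rw [show (1 - Tri.P A M B) * Y * (1 - Tri.P A M B) *
        (Tri.P A M B * X * Tri.P A M B) =
      ((1 - Tri.P A M B) * Y) * (((1 - Tri.P A M B) * Tri.P A M B) * (X * Tri.P A M B)) by
        simp only [mul_assoc]]
    rw [Tri.QP_zero, zero_mul, mul_zero]
  have h := hLem (Tri.P A M B * X * Tri.P A M B)
    ((1 - Tri.P A M B) * Y * (1 - Tri.P A M B))
  rw [hXY, hYX, add_zero, h0] at h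
  rw [Finset.sum_add_distrib] at h
  have h2 : ∑ ij ∈ Finset.HasAntidiagonal.antidiagonal n,
      δ ij.1 ((1 - Tri.P A M B) * Y * (1 - Tri.P A M B)) *
        τ ij.2 (Tri.P A M B * X * Tri.P A M B) = 0 := by
    apply Finset.sum_eq_zero
    intro ij hij
    have hle : ij.1 ≤ n := by
      have := Finset.HasAntidiagonal.mem_antidiagonal.mp hij
      omega
    exact Tri.quqq_mul_pupq (hδiQUQ ij.1 hle Y) (hτPUP ij.2 X)
  rw [h2, add_zero] at h
  exact h.symm
end

section
/- Let U be a triangular ring with standard idempotent P, Q = I − P, and let G = (δ_i) be an additive generalized Jordan higher derivation with relating higher derivation D = (τ_i), satisfying δ_n(QXQ) = Σ_{i+j=n} δ_i(Q)τ_j(QXQ)Q for all X. Then δ_n(QXQYQ) = Σ_{i+j=n} δ_i(QXQ)τ_j(QYQ) for all X, Y ∈ U. -/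
set_option linter.unusedSectionVars false

variable (A M B : Type*) [Ring A] [Ring B] [AddCommGroup M]
  [Module A M] [Module Bᵐᵒᵖ M] [SMulCommClass A Bᵐᵒᵖ M]

variable {A M B}

lemma triple_swap {R : Type*} [AddCommMonoid R] (n : ℕ) (f : ℕ → ℕ → ℕ → R) :
    ∑ ij ∈ Finset.HasAntidiagonal.antidiagonal n, ∑ kl ∈ Finset.HasAntidiagonal.antidiagonal ij.2, f ij.1 kl.1 kl.2 =
    ∑ ij ∈ Finset.HasAntidiagonal.antidiagonal n, ∑ kl ∈ Finset.HasAntidiagonal.antidiagonal ij.1, f kl.1 kl.2 ij.2 := by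
  rw [Finset.sum_sigma', Finset.sum_sigma']
  refine Finset.sum_nbij' (i := fun p => ⟨(p.1.1 + p.2.1, p.2.2), (p.1.1, p.2.1)⟩)
    (j := fun q => ⟨(q.2.1, q.2.2 + q.1.2), (q.2.2, q.1.2)⟩) ?_ ?_ ?_ ?_ ?_
  · rintro ⟨⟨i, j⟩, ⟨k, l⟩⟩ hp
    simp only [Finset.mem_sigma, Finset.HasAntidiagonal.mem_antidiagonal] at hp ⊢
    exact ⟨by omega, trivial⟩
  · rintro ⟨⟨i, j⟩, ⟨k, l⟩⟩ hp
    simp only [Finset.mem_sigma, Finset.HasAntidiagonal.mem_antidiagonal] at hp ⊢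
    exact ⟨by omega, trivial⟩
  · rintro ⟨⟨i, j⟩, ⟨k, l⟩⟩ hp
    simp only [Finset.mem_sigma, Finset.HasAntidiagonal.mem_antidiagonal] at hp
    dsimp only
    rw [hp.2]
  · rintro ⟨⟨i, j⟩, ⟨k, l⟩⟩ hp
    simp only [Finset.mem_sigma, Finset.HasAntidiagonal.mem_antidiagonal] at hp
    dsimp only
    rw [hp.2]
  · rintro ⟨⟨i, j⟩, ⟨k, l⟩⟩ hp
    rfl

/-- Step 5(4) of Theorem 3.1: if `δ_m(QXQ) = Σ_{i+j=m} δ_i(Q)τ_j(QXQ)Q` for all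
`m ≤ n`, then `δ_n(QXQYQ) = Σ_{i+j=n} δ_i(QXQ)τ_j(QYQ)`. -/
theorem stmt12 (δ τ : ℕ → Tri A M B → Tri A M B) (n : ℕ)
    (hδ0 : δ 0 = id) (hτ0 : τ 0 = id)
    (hτHD : ∀ k X Y, τ k (X * Y) = ∑ ij ∈ Finset.HasAntidiagonal.antidiagonal k, τ ij.1 X * τ ij.2 Y)
    (hτQ : ∀ k, 1 ≤ k → Tri.inPUQ (τ k (1 - Tri.P A M B)))
    (hτQUQ : ∀ j X, Tri.inQUQQ (τ j ((1 - Tri.P A M B) * X * (1 - Tri.P A M B))))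
    (hδiQ : ∀ i ≤ n, Tri.inQUQQ (δ i (1 - Tri.P A M B)))
    (hQXQ : ∀ m ≤ n, ∀ X, δ m ((1 - Tri.P A M B) * X * (1 - Tri.P A M B)) =
      ∑ ij ∈ Finset.HasAntidiagonal.antidiagonal m,
        δ ij.1 (1 - Tri.P A M B) *
          τ ij.2 ((1 - Tri.P A M B) * X * (1 - Tri.P A M B)) * (1 - Tri.P A M B)) :
    ∀ X Y, δ n ((1 - Tri.P A M B) * X * (1 - Tri.P A M B) * Y * (1 - Tri.P A M B)) =
      ∑ ij ∈ Finset.HasAntidiagonal.antidiagonal n,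
        δ ij.1 ((1 - Tri.P A M B) * X * (1 - Tri.P A M B)) *
          τ ij.2 ((1 - Tri.P A M B) * Y * (1 - Tri.P A M B))  := by
  intro X Y
  set Q := 1 - Tri.P A M B with hQdef
  have hmulQ : ∀ x : Tri A M B, x.a = 0 → x * Q = x := by
    intro x hx
    ext <;> simp [hQdef, hx, Tri.P, sub_eq_add_neg]
  have hQQ : Q * Q = Q := by
    ext <;> simp [hQdef, Tri.P, sub_eq_add_neg]
  have ha0 : ∀ x : Tri A M B, Tri.inQUQQ x → x.a = 0 := by
    rintro x ⟨s, t, rfl⟩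
    simp [Tri.P, sub_eq_add_neg]
  have hXa : ∀ k, (τ k (Q * X * Q)).a = 0 := fun k => ha0 _ (hτQUQ k X)
  have hYa : ∀ k, (τ k (Q * Y * Q)).a = 0 := fun k => ha0 _ (hτQUQ k Y)
  have hsplit : (Q * X * Q) * (Q * Y * Q) = Q * X * Q * Y * Q := by
    rw [show Q * Y * Q = Q * (Y * Q) from by rw [mul_assoc],
      ← mul_assoc (Q * X * Q) Q (Y * Q), mul_assoc (Q * X) Q Q, hQQ, ← mul_assoc]
  calc δ n (Q * X * Q * Y * Q)
      = δ n (Q * (X * Q * Y) * Q) := by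
        rw [show Q * X * Q * Y * Q = Q * (X * Q * Y) * Q from by simp only [mul_assoc]]
    _ = ∑ ij ∈ Finset.HasAntidiagonal.antidiagonal n,
          δ ij.1 Q * τ ij.2 (Q * (X * Q * Y) * Q) * Q := hQXQ n le_rfl _
    _ = ∑ ij ∈ Finset.HasAntidiagonal.antidiagonal n, ∑ kl ∈ Finset.HasAntidiagonal.antidiagonal ij.2,
          δ ij.1 Q * τ kl.1 (Q * X * Q) * τ kl.2 (Q * Y * Q) := by
        refine Finset.sum_congr rfl fun ij hij => ?_
        rw [show Q * (X * Q * Y) * Q = (Q * X * Q) * (Q * Y * Q) from by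
            rw [hsplit]; simp only [mul_assoc],
          hτHD, Finset.mul_sum, Finset.sum_mul]
        refine Finset.sum_congr rfl fun kl hkl => ?_
        rw [hmulQ (δ ij.1 Q * (τ kl.1 (Q * X * Q) * τ kl.2 (Q * Y * Q)))
            (by simp [hXa, hYa]), ← mul_assoc]
    _ = ∑ ij ∈ Finset.HasAntidiagonal.antidiagonal n, ∑ kl ∈ Finset.HasAntidiagonal.antidiagonal ij.1,
          δ kl.1 Q * τ kl.2 (Q * X * Q) * τ ij.2 (Q * Y * Q) :=
        triple_swap n fun i k l => δ i Q * τ k (Q * X * Q) * τ l (Q * Y * Q)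
    _ = ∑ ij ∈ Finset.HasAntidiagonal.antidiagonal n,
          δ ij.1 (Q * X * Q) * τ ij.2 (Q * Y * Q) := by
        refine Finset.sum_congr rfl fun ij hij => ?_
        have hle : ij.1 ≤ n := by
          have := Finset.HasAntidiagonal.mem_antidiagonal.mp hij; omega
        rw [hQXQ ij.1 hle X, Finset.sum_mul]
        refine Finset.sum_congr rfl fun kl hkl => ?_
        rw [hmulQ (δ kl.1 Q * τ kl.2 (Q * X * Q)) (by simp [hXa])]
end
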